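/- Let τ = (1+√5)/2 and let ℤ_τ⁺ be the set of τ-integers. Then: (i) every nonzero x ∈ ℤ_τ⁺ has a unique representation x = Σ_{k=0}^n ε_k·τ^k with each ε_k ∈ {0,1}, ε_n = 1, and ε_k·ε_{k+1} = 0 for 0 ≤ k ≤ n−1; (ii) ℤ_τ⁺ ∖ {0} is the disjoint union of τ·ℤ_τ⁺ ∖ {0} and 1 + τ²·ℤ_τ⁺, and τ·ℤ_τ⁺ ∖ {0} is the disjoint union of τ + τ²·ℤ_τ⁺ and τ² + τ³·ℤ_τ⁺; (iii) for every nonzero a ∈ ℤ_τ⁺ with predecessor a₋ and successor a₊ in ℤ_τ⁺: if a ∈ 1 + τ²·ℤ_τ⁺ then a − a₋ = 1 and a₊ − a = 1/τ; if a ∈ τ + τ²·ℤ_τ⁺ then a − a₋ = 1/τ and a₊ − a = 1; and if a ∈ τ² + τ³·ℤ_τ⁺ then a − a₋ = 1 and a₊ − a = 1. -/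

import Mathlib

open Set

noncomputable section

namespace TauInt

/-- The golden ratio `τ = (1+√5)/2`. -/
def τ : ℝ := (1 + Real.sqrt 5) / 2

/-- The set `ℤ_τ⁺` of `τ`-integers: real numbers of the form
`Σ_{k=0}^n ε_k·τ^k` with each `ε_k ∈ {0,1}`. -/
def Ztau : Set ℝ :=
  {x | ∃ (n : ℕ) (ε : ℕ → ℕ), (∀ k ≤ n, ε k = 0 ∨ ε k = 1) ∧
    x = ∑ k ∈ Finset.range (n + 1), (ε k : ℝ) * τ ^ k}

/-- The successor of `a` in `ℤ_τ⁺`. -/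
def succZ (a : ℝ) : ℝ := sInf {b ∈ Ztau | a < b}

/-- The predecessor of `a` in `ℤ_τ⁺`. -/
def predZ (a : ℝ) : ℝ := sSup {b ∈ Ztau | b < a}

lemma tau_sq : τ ^ 2 = τ + 1 := by
  have h5 : Real.sqrt 5 ^ 2 = 5 := Real.sq_sqrt (by norm_num)
  unfold τ; nlinarith [h5]

lemma tau_gt_one : 1 < τ := by
  have h5 : Real.sqrt 5 ^ 2 = 5 := Real.sq_sqrt (by norm_num)
  have : 1 < Real.sqrt 5 := by nlinarith [Real.sqrt_nonneg 5]
  unfold τ; linarith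

lemma tau_pos : 0 < τ := lt_trans one_pos tau_gt_one

lemma tau_inv : τ - 1 = 1 / τ := by
  have := tau_sq
  have h0 : τ ≠ 0 := ne_of_gt tau_pos
  field_simp
  nlinarith [this]

lemma pow_rec (k : ℕ) : τ ^ (k + 2) = τ ^ (k + 1) + τ ^ k := by
  have h := tau_sq
  calc τ ^ (k+2) = τ ^ k * τ ^ 2 := by ring
  _ = τ ^ k * (τ + 1) := by rw [h]
  _ = τ ^ (k+1) + τ ^ k := by ring

lemma one_le_tau_pow (k : ℕ) : 1 ≤ τ ^ k := one_le_pow₀ (le_of_lt tau_gt_one)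

lemma tau_pow_pos (k : ℕ) : 0 < τ ^ k := lt_of_lt_of_le one_pos (one_le_tau_pow k)

/-- value of a finite set of exponents -/
def val (s : Finset ℕ) : ℝ := ∑ k ∈ s, τ ^ k

/-- Zeckendorf condition -/
def Zk (s : Finset ℕ) : Prop := ∀ k ∈ s, k + 1 ∉ s

lemma val_nonneg (s : Finset ℕ) : 0 ≤ val s :=
  Finset.sum_nonneg fun k _ => le_of_lt (tau_pow_pos k)

lemma pow_le_val {s : Finset ℕ} {k : ℕ} (h : k ∈ s) : τ ^ k ≤ val s :=
  Finset.single_le_sum (fun i _ => le_of_lt (tau_pow_pos i)) h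

lemma one_le_val {s : Finset ℕ} (h : s.Nonempty) : 1 ≤ val s := by
  obtain ⟨k, hk⟩ := h
  exact le_trans (one_le_tau_pow k) (pow_le_val hk)

lemma val_pos {s : Finset ℕ} (h : s.Nonempty) : 0 < val s :=
  lt_of_lt_of_le one_pos (one_le_val h)

lemma val_empty : val (∅ : Finset ℕ) = 0 := by simp [val]

lemma nonempty_of_val_ne_zero {s : Finset ℕ} (h : val s ≠ 0) : s.Nonempty := by
  rcases s.eq_empty_or_nonempty with rfl | h'
  · exact absurd val_empty h
  · exact h'

lemma mem_Ztau_iff {x : ℝ} : x ∈ Ztau ↔ ∃ s : Finset ℕ, x = val s := by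
  constructor
  · rintro ⟨n, ε, hε, rfl⟩
    refine ⟨(Finset.range (n+1)).filter (fun k => ε k = 1), ?_⟩
    rw [val, Finset.sum_filter]
    refine Finset.sum_congr rfl fun k hk => ?_
    rcases hε k (Finset.mem_range_succ_iff.mp hk) with h | h <;> simp [h]
  · rintro ⟨s, rfl⟩
    refine ⟨s.sup id, fun k => if k ∈ s then 1 else 0, fun k _ => by by_cases h : k ∈ s <;> simp [h], ?_⟩
    have hsub : s ⊆ Finset.range (s.sup id + 1) := fun k hk =>
      Finset.mem_range_succ_iff.mpr (Finset.le_sup (f := id) hk)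
    rw [val]
    rw [← Finset.sum_subset hsub (fun k _ hk => by simp [hk])]
    refine Finset.sum_congr rfl fun k hk => by simp [hk]

lemma val_mem_Ztau (s : Finset ℕ) : val s ∈ Ztau := mem_Ztau_iff.mpr ⟨s, rfl⟩

lemma Ztau_nonneg {x : ℝ} (h : x ∈ Ztau) : 0 ≤ x := by
  obtain ⟨s, rfl⟩ := mem_Ztau_iff.mp h
  exact val_nonneg s

lemma val_image_add (s : Finset ℕ) (d : ℕ) :
    val (s.image (· + d)) = τ ^ d * val s := by
  rw [val, Finset.sum_image (by intro x _ y _ h; simp only at h; omega)]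
  rw [val, Finset.mul_sum]
  exact Finset.sum_congr rfl fun k _ => by rw [pow_add]; ring

lemma unshift_image {s : Finset ℕ} {d : ℕ} (h : ∀ k ∈ s, d ≤ k) :
    (s.image (· - d)).image (· + d) = s := by
  ext k
  simp only [Finset.mem_image]
  constructor
  · rintro ⟨a, ⟨b, hb, rfl⟩, rfl⟩
    have := h b hb
    have : b - d + d = b := by omega
    rwa [this]
  · intro hk
    exact ⟨k - d, ⟨k, hk, rfl⟩, by have := h k hk; omega⟩

lemma val_image_sub {s : Finset ℕ} {d : ℕ} (h : ∀ k ∈ s, d ≤ k) :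
    val s = τ ^ d * val (s.image (· - d)) := by
  conv_lhs => rw [← unshift_image h]
  rw [val_image_add]

lemma Zk_subset {s t : Finset ℕ} (hsub : t ⊆ s) (h : Zk s) : Zk t :=
  fun k hk hk1 => h k (hsub hk) (hsub hk1)

lemma Zk_image_add {s : Finset ℕ} (h : Zk s) (d : ℕ) : Zk (s.image (· + d)) := by
  rintro k hk hk1
  simp only [Finset.mem_image] at hk hk1
  obtain ⟨a, ha, rfl⟩ := hk
  obtain ⟨b, hb, hb1⟩ := hk1
  have : b = a + 1 := by omega
  exact h a ha (this ▸ hb)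

lemma Zk_image_sub {s : Finset ℕ} (h : Zk s) {d : ℕ} (hd : ∀ k ∈ s, d ≤ k) :
    Zk (s.image (· - d)) := by
  rintro k hk hk1
  simp only [Finset.mem_image] at hk hk1
  obtain ⟨a, ha, rfl⟩ := hk
  obtain ⟨b, hb, hb1⟩ := hk1
  have hda := hd a ha
  have hdb := hd b hb
  have : b = a + 1 := by omega
  exact h a ha (this ▸ hb)

lemma val_erase {s : Finset ℕ} {a : ℕ} (h : a ∈ s) :
    val (s.erase a) = val s - τ ^ a := by
  have := Finset.sum_erase_add s (fun k => τ ^ k) h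
  rw [val, val]
  linarith [this]


lemma tau_pow_lt {m n : ℕ} (h : m < n) : τ ^ m < τ ^ n :=
  pow_lt_pow_right₀ tau_gt_one h

lemma val_lt_pow : ∀ n : ℕ, ∀ s : Finset ℕ, Zk s → (∀ k ∈ s, k < n) → val s < τ ^ n := by
  intro n
  induction n using Nat.strong_induction_on with
  | _ n ih =>
    intro s hs hbd
    rcases s.eq_empty_or_nonempty with rfl | hne
    · rw [val_empty]; exact tau_pow_pos n
    match n with
    | 0 =>
      obtain ⟨k, hk⟩ := hne
      exact absurd (hbd k hk) (by omega)
    | (m+1) =>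
      by_cases hm : m ∈ s
      · match m with
        | 0 =>
          have : s = {0} := by
            apply Finset.eq_singleton_iff_unique_mem.mpr
            exact ⟨hm, fun k hk => by have := hbd k hk; omega⟩
          rw [this]
          simp only [val, Finset.sum_singleton, pow_zero]
          exact lt_of_lt_of_le tau_gt_one (by rw [pow_one])
        | (j+1) =>
          have hj : j ∉ s := fun hj => hs j hj hm
          have hval : val (s.erase (j+1)) = val s - τ ^ (j+1) := val_erase hm
          have hbd' : ∀ k ∈ s.erase (j+1), k < j := by
            intro k hk
            have h1 := Finset.mem_erase.mp hk
            have h2 := hbd k h1.2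
            rcases Nat.lt_or_ge k j with h | h
            · exact h
            · exfalso
              have : k = j ∨ k = j + 1 := by omega
              rcases this with rfl | rfl
              · exact hj h1.2
              · exact h1.1 rfl
          have := ih j (by omega) (s.erase (j+1)) (Zk_subset (Finset.erase_subset _ _) hs) hbd'
          have hrec := pow_rec j
          have : val s < τ ^ (j+1) + τ ^ j := by linarith
          linarith [pow_rec j]
      · have hbd' : ∀ k ∈ s, k < m := by
          intro k hk
          have := hbd k hk
          rcases Nat.lt_or_ge k m with h | h
          · exact h
          · exfalso; have : k = m := by omega
            exact hm (this ▸ hk)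
        exact lt_trans (ih m (by omega) s hs hbd') (tau_pow_lt (by omega))

lemma val_lt_max {s : Finset ℕ} (hne : s.Nonempty) (hs : Zk s) :
    val s < τ ^ (s.max' hne + 1) :=
  val_lt_pow _ s hs fun k hk => Nat.lt_succ_of_le (Finset.le_max' s k hk)

lemma zk_unique_aux : ∀ c : ℕ, ∀ s t : Finset ℕ, s.card ≤ c → Zk s → Zk t →
    val s = val t → s = t := by
  intro c
  induction c with
  | zero =>
    intro s t hc hs ht hv
    have hse : s = ∅ := Finset.card_eq_zero.mp (by omega)
    subst hse
    rcases t.eq_empty_or_nonempty with rfl | hne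
    · rfl
    · exfalso; rw [val_empty] at hv; exact absurd hv.symm (ne_of_gt (val_pos hne))
  | succ c ih =>
    intro s t hc hs ht hv
    rcases s.eq_empty_or_nonempty with rfl | hsne
    · rcases t.eq_empty_or_nonempty with rfl | hne
      · rfl
      · exfalso; rw [val_empty] at hv; exact absurd hv.symm (ne_of_gt (val_pos hne))
    have htne : t.Nonempty := by
      apply nonempty_of_val_ne_zero
      rw [← hv]; exact ne_of_gt (val_pos hsne)
    obtain ⟨m, hm⟩ : ∃ m, s.max' hsne = m := ⟨_, rfl⟩
    obtain ⟨m', hm'⟩ : ∃ m', t.max' htne = m' := ⟨_, rfl⟩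
    have hmmem : m ∈ s := hm ▸ s.max'_mem hsne
    have hmmem' : m' ∈ t := hm' ▸ t.max'_mem htne
    have h1 : τ ^ m ≤ val s := pow_le_val hmmem
    have h2 : τ ^ m' ≤ val t := pow_le_val hmmem'
    have h3 : val s < τ ^ (m + 1) := hm ▸ val_lt_max hsne hs
    have h4 : val t < τ ^ (m' + 1) := hm' ▸ val_lt_max htne ht
    have hmm : m = m' := by
      have f1 : m < m' + 1 := by
        by_contra h
        have : τ ^ (m' + 1) ≤ τ ^ m := pow_le_pow_right₀ (le_of_lt tau_gt_one) (by omega)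
        linarith
      have f2 : m' < m + 1 := by
        by_contra h
        have : τ ^ (m + 1) ≤ τ ^ m' := pow_le_pow_right₀ (le_of_lt tau_gt_one) (by omega)
        linarith
      omega
    have hve : val (s.erase m) = val (t.erase m') := by
      rw [val_erase hmmem, val_erase hmmem', hv, hmm]
    have hcard : (s.erase m).card ≤ c := by
      have h5 := Finset.card_erase_of_mem hmmem
      have hpos : 1 ≤ s.card := Finset.card_pos.mpr hsne
      omega
    have heq := ih (s.erase m) (t.erase m') hcard
      (Zk_subset (Finset.erase_subset _ _) hs) (Zk_subset (Finset.erase_subset _ _) ht) hve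
    have hins : insert m (s.erase m) = insert m' (t.erase m') := by rw [heq, hmm]
    rw [Finset.insert_erase hmmem, Finset.insert_erase hmmem'] at hins
    exact hins

lemma zk_unique {s t : Finset ℕ} (hs : Zk s) (ht : Zk t) (hv : val s = val t) : s = t :=
  zk_unique_aux s.card s t le_rfl hs ht hv

lemma zk_exists_aux : ∀ c : ℕ, ∀ s : Finset ℕ, s.card ≤ c → ∃ t, Zk t ∧ val t = val s := by
  intro c
  induction c with
  | zero =>
    intro s hc
    have : s = ∅ := Finset.card_eq_zero.mp (by omega)
    subst this
    exact ⟨∅, fun k hk => by simp at hk, rfl⟩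
  | succ c ih =>
    intro s hc
    by_cases hZ : Zk s
    · exact ⟨s, hZ, rfl⟩
    · have : ∃ k ∈ s, k + 1 ∈ s := by
        by_contra h
        push_neg at h
        exact hZ h
      set K := s.filter (fun k => k + 1 ∈ s) with hK
      have hKne : K.Nonempty := by
        obtain ⟨k, hk1, hk2⟩ := this
        exact ⟨k, Finset.mem_filter.mpr ⟨hk1, hk2⟩⟩
      set k := K.max' hKne with hk
      have hkmem := Finset.mem_filter.mp (K.max'_mem hKne)
      have hks : k ∈ s := hkmem.1
      have hk1s : k + 1 ∈ s := hkmem.2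
      have hk2s : k + 2 ∉ s := by
        intro h
        have : k + 1 ∈ K := Finset.mem_filter.mpr ⟨hk1s, h⟩
        have := Finset.le_max' K (k+1) this
        omega
      set s' := insert (k+2) ((s.erase k).erase (k+1)) with hs'
      have hk2ne : k + 2 ∉ (s.erase k).erase (k+1) := fun h =>
        hk2s (Finset.mem_of_mem_erase (Finset.mem_of_mem_erase h))
      have hcard : s'.card ≤ c := by
        rw [hs', Finset.card_insert_of_notMem hk2ne]
        have h1 : k + 1 ∈ s.erase k := Finset.mem_erase.mpr ⟨by omega, hk1s⟩
        rw [Finset.card_erase_of_mem h1, Finset.card_erase_of_mem hks]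
        have : 2 ≤ s.card := by
          have := Finset.one_lt_card.mpr ⟨k, hks, k+1, hk1s, by omega⟩
          omega
        omega
      have hval : val s' = val s := by
        rw [hs', val, Finset.sum_insert hk2ne, ← val]
        rw [val_erase (Finset.mem_erase.mpr ⟨by omega, hk1s⟩), val_erase hks]
        rw [pow_rec]
        ring
      obtain ⟨t, ht, htv⟩ := ih s' hcard
      exact ⟨t, ht, by rw [htv, hval]⟩

lemma zk_exists (s : Finset ℕ) : ∃ t, Zk t ∧ val t = val s :=
  zk_exists_aux s.card s le_rfl


lemma lemG_base {t : Finset ℕ} (h0 : 0 ∉ t) (ht : Zk t) (m : ℕ) :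
    ∃ s m₀, Zk s ∧ m₀ ∈ s ∧ (∀ k ∈ s, m₀ ≤ k) ∧ m₀ = m ∧
      val s = τ ^ m + τ ^ (m + 1) * val t := by
  refine ⟨insert m (t.image (· + (m+1))), m, ?_, Finset.mem_insert_self _ _, ?_, rfl, ?_⟩
  · intro k hk hk1
    rcases Finset.mem_insert.mp hk with rfl | hk
    · rcases Finset.mem_insert.mp hk1 with h | h
      · omega
      · obtain ⟨b, hb, hb1⟩ := Finset.mem_image.mp h
        have : b = 0 := by omega
        exact h0 (this ▸ hb)
    · obtain ⟨a, ha, rfl⟩ := Finset.mem_image.mp hk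
      rcases Finset.mem_insert.mp hk1 with h | h
      · omega
      · obtain ⟨b, hb, hb1⟩ := Finset.mem_image.mp h
        have : b = a + 1 := by omega
        exact ht a ha (this ▸ hb)
  · intro k hk
    rcases Finset.mem_insert.mp hk with rfl | hk
    · exact le_rfl
    · obtain ⟨a, _, rfl⟩ := Finset.mem_image.mp hk
      omega
  · have hnm : m ∉ t.image (· + (m+1)) := by
      intro h
      obtain ⟨a, _, ha⟩ := Finset.mem_image.mp h
      omega
    rw [val, Finset.sum_insert hnm, ← val, val_image_add]

lemma erase_zero_ge_two {t : Finset ℕ} (ht : Zk t) (h0 : 0 ∈ t) :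
    ∀ k ∈ t.erase 0, 2 ≤ k := by
  intro k hk
  obtain ⟨hne, hmem⟩ := Finset.mem_erase.mp hk
  have h1 : (1:ℕ) ∉ t := ht 0 h0
  by_contra h
  have : k = 1 := by omega
  exact h1 (this ▸ hmem)

lemma lemG_aux : ∀ c : ℕ, ∀ t : Finset ℕ, Zk t → t.card ≤ c → ∀ m, 1 ≤ m →
    ∃ s m₀, Zk s ∧ m₀ ∈ s ∧ (∀ k ∈ s, m₀ ≤ k) ∧ 1 ≤ m₀ ∧ m₀ % 2 = m % 2 ∧
      val s = τ ^ m + τ ^ (m + 1) * val t := by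
  intro c
  induction c with
  | zero =>
    intro t ht hc m hm
    have : t = ∅ := Finset.card_eq_zero.mp (by omega)
    subst this
    obtain ⟨s, m₀, h1, h2, h3, h4, h5⟩ := lemG_base (by simp) ht m
    exact ⟨s, m₀, h1, h2, h3, by omega, by omega, h5⟩
  | succ c ih =>
    intro t ht hc m hm
    by_cases h0 : 0 ∈ t
    · have hge2 := erase_zero_ge_two ht h0
      set t' := (t.erase 0).image (· - 2) with ht'
      have hZt' : Zk t' := Zk_image_sub (Zk_subset (Finset.erase_subset _ _) ht) hge2
      have hcard : t'.card ≤ c := by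
        have h1 : t'.card ≤ (t.erase 0).card := ht' ▸ Finset.card_image_le
        have h2 := Finset.card_erase_of_mem h0
        have h3 : 1 ≤ t.card := Finset.card_pos.mpr ⟨0, h0⟩
        omega
      have hvt : val t = 1 + τ ^ 2 * val t' := by
        have h1 : val (t.erase 0) = val t - τ ^ 0 := val_erase h0
        have h2 : val (t.erase 0) = τ ^ 2 * val t' := val_image_sub hge2
        rw [pow_zero] at h1
        linarith
      obtain ⟨s, m₀, h1, h2, h3, h4, h5, h6⟩ := ih t' hZt' hcard (m + 2) (by omega)
      refine ⟨s, m₀, h1, h2, h3, by omega, by omega, ?_⟩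
      rw [h6, hvt]
      have hr := pow_rec m
      have e1 : τ ^ (m+1) * (1 + τ ^ 2 * val t') = τ ^ (m+1) + τ ^ (m+3) * val t' := by
        rw [pow_add, pow_add]; ring
      have e3 : τ ^ (m+2) + τ ^ ((m+2)+1) * val t' = τ ^ (m+2) + τ ^ (m+3) * val t' := by norm_num
      rw [e3, e1]
      linarith
    · obtain ⟨s, m₀, h1, h2, h3, h4, h5⟩ := lemG_base h0 ht m
      exact ⟨s, m₀, h1, h2, h3, by omega, by omega, h5⟩

/-- value of the even set {0, 2, ..., 2(j-1)} -/
def vE (j : ℕ) : ℝ := val ((Finset.range j).image (fun i => 2 * i))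

lemma vE_succ (j : ℕ) : vE (j + 1) = vE j + τ ^ (2 * j) := by
  unfold vE val
  rw [Finset.sum_image (by intro x _ y _ h; simp only at h; omega), Finset.sum_image (by intro x _ y _ h; simp only at h; omega)]
  exact Finset.sum_range_succ _ j

lemma vE_zero : vE 0 = 0 := by simp [vE, val]

lemma W1 (j : ℕ) : τ + τ ^ 2 * vE j = τ ^ (2 * j + 1) := by
  induction j with
  | zero => rw [vE_zero]; ring
  | succ j ih =>
    rw [vE_succ]
    have h1 : 2 * (j + 1) + 1 = (2 * j + 1) + 2 := by ring
    rw [h1, pow_rec (2*j+1)]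
    have h2 : 2 * j + 1 + 1 = (2 * j) + 2 := by ring
    have e : τ ^ 2 * (vE j + τ ^ (2*j)) = τ ^ 2 * vE j + τ ^ (2*j+2) := by
      rw [pow_add]; ring
    rw [e, h2]
    linarith

lemma W2 (j : ℕ) : τ ^ 2 + τ ^ 3 * vE j = τ ^ (2 * j + 2) := by
  induction j with
  | zero => rw [vE_zero]; ring
  | succ j ih =>
    rw [vE_succ]
    have h1 : 2 * (j + 1) + 2 = (2 * j + 2) + 2 := by ring
    rw [h1, pow_rec (2*j+2)]
    have h2 : 2 * j + 2 + 1 = (2 * j) + 3 := by ring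
    have e : τ ^ 3 * (vE j + τ ^ (2*j)) = τ ^ 3 * vE j + τ ^ (2*j+3) := by
      rw [pow_add]; ring
    rw [e, h2]
    linarith

lemma erase_min_ge {s : Finset ℕ} (hs : Zk s) {m₀ : ℕ} (hm : m₀ ∈ s)
    (hmin : ∀ k ∈ s, m₀ ≤ k) : ∀ k ∈ s.erase m₀, m₀ + 2 ≤ k := by
  intro k hk
  obtain ⟨hne, hmem⟩ := Finset.mem_erase.mp hk
  have h1 := hmin k hmem
  have h2 : m₀ + 1 ∉ s := hs m₀ hm
  by_contra h
  have : k = m₀ + 1 := by omega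
  exact h2 (this ▸ hmem)

lemma H_zero {s : Finset ℕ} (hs : Zk s) (hm : 0 ∈ s) :
    ∃ y ∈ Ztau, val s = 1 + τ ^ 2 * y := by
  have hge := erase_min_ge hs hm (fun k _ => Nat.zero_le k)
  refine ⟨val ((s.erase 0).image (· - 2)), val_mem_Ztau _, ?_⟩
  have h1 : val (s.erase 0) = val s - τ ^ 0 := val_erase hm
  have h2 : val (s.erase 0) = τ ^ 2 * val ((s.erase 0).image (· - 2)) :=
    val_image_sub (by intro k hk; have := hge k hk; omega)
  rw [pow_zero] at h1
  linarith

lemma H_pos {s : Finset ℕ} {m₀ : ℕ} (hm : m₀ ∈ s) (hmin : ∀ k ∈ s, m₀ ≤ k)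
    (h1 : 1 ≤ m₀) : ∃ y ∈ Ztau, val s = τ * y := by
  refine ⟨val (s.image (· - 1)), val_mem_Ztau _, ?_⟩
  have := val_image_sub (s := s) (d := 1) (fun k hk => le_trans h1 (hmin k hk))
  rwa [pow_one] at this

lemma H_odd {s : Finset ℕ} (hs : Zk s) {m₀ j : ℕ} (hm : m₀ ∈ s)
    (hmin : ∀ k ∈ s, m₀ ≤ k) (hodd : m₀ = 2 * j + 1) :
    ∃ y ∈ Ztau, val s = τ + τ ^ 2 * y := by
  have hge := erase_min_ge hs hm hmin
  set r := s.erase m₀ with hr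
  have hdisj : Disjoint ((Finset.range j).image (fun i => 2 * i)) (r.image (· - 2)) := by
    rw [Finset.disjoint_left]
    intro k hk hk'
    obtain ⟨i, hi, rfl⟩ := Finset.mem_image.mp hk
    obtain ⟨b, hb, hb1⟩ := Finset.mem_image.mp hk'
    have := hge b hb
    have := Finset.mem_range.mp hi
    omega
  refine ⟨val (((Finset.range j).image (fun i => 2 * i)) ∪ (r.image (· - 2))),
    val_mem_Ztau _, ?_⟩
  have hu : val (((Finset.range j).image (fun i => 2 * i)) ∪ (r.image (· - 2))) =
      vE j + val (r.image (· - 2)) := by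
    rw [val, Finset.sum_union hdisj]; rfl
  have h1 : val r = val s - τ ^ m₀ := val_erase hm
  have h2 : val r = τ ^ 2 * val (r.image (· - 2)) :=
    val_image_sub (by intro k hk; have := hge k hk; omega)
  have h3 := W1 j
  rw [hu, ← hodd] at *
  have e : τ ^ 2 * (vE j + val (r.image (· - 2))) = τ ^ 2 * vE j + τ ^ 2 * val (r.image (· - 2)) := by ring
  rw [e]
  linarith

lemma H_even {s : Finset ℕ} (hs : Zk s) {m₀ j : ℕ} (hm : m₀ ∈ s)
    (hmin : ∀ k ∈ s, m₀ ≤ k) (heven : m₀ = 2 * j + 2) :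
    ∃ y ∈ Ztau, val s = τ ^ 2 + τ ^ 3 * y := by
  have hge := erase_min_ge hs hm hmin
  set r := s.erase m₀ with hr
  have hdisj : Disjoint ((Finset.range j).image (fun i => 2 * i)) (r.image (· - 3)) := by
    rw [Finset.disjoint_left]
    intro k hk hk'
    obtain ⟨i, hi, rfl⟩ := Finset.mem_image.mp hk
    obtain ⟨b, hb, hb1⟩ := Finset.mem_image.mp hk'
    have := hge b hb
    have := Finset.mem_range.mp hi
    omega
  refine ⟨val (((Finset.range j).image (fun i => 2 * i)) ∪ (r.image (· - 3))),
    val_mem_Ztau _, ?_⟩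
  have hu : val (((Finset.range j).image (fun i => 2 * i)) ∪ (r.image (· - 3))) =
      vE j + val (r.image (· - 3)) := by
    rw [val, Finset.sum_union hdisj]; rfl
  have h1 : val r = val s - τ ^ m₀ := val_erase hm
  have h2 : val r = τ ^ 3 * val (r.image (· - 3)) :=
    val_image_sub (by intro k hk; have := hge k hk; omega)
  have h3 := W2 j
  rw [hu, ← heven] at *
  have e : τ ^ 3 * (vE j + val (r.image (· - 3))) = τ ^ 3 * vE j + τ ^ 3 * val (r.image (· - 3)) := by ring
  rw [e]
  linarith


lemma le_sup_of_mem {s : Finset ℕ} {k : ℕ} (h : k ∈ s) : k ≤ s.sup id :=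
  Finset.le_sup (f := id) h

lemma sup_image_sub_le (s : Finset ℕ) (d : ℕ) : (s.image (· - d)).sup id ≤ s.sup id - d := by
  apply Finset.sup_le
  rintro j hj
  obtain ⟨k, hk, rfl⟩ := Finset.mem_image.mp hj
  have := le_sup_of_mem hk
  simp only [id]
  omega

lemma sup_erase_le (s : Finset ℕ) (a : ℕ) : (s.erase a).sup id ≤ s.sup id :=
  Finset.sup_mono (Finset.erase_subset _ _)

lemma val_decomp_pos {s : Finset ℕ} (h0 : 0 ∉ s) : val s = τ * val (s.image (· - 1)) := by
  have h : ∀ k ∈ s, 1 ≤ k := by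
    intro k hk
    rcases Nat.eq_zero_or_pos k with rfl | h
    · exact absurd hk h0
    · exact h
  have := val_image_sub h
  rwa [pow_one] at this

lemma val_decomp_zero {s : Finset ℕ} (hs : Zk s) (h0 : 0 ∈ s) :
    val s = 1 + τ * val ((s.erase 0).image (· - 1)) := by
  have hge := erase_zero_ge_two hs h0
  have h1 : val (s.erase 0) = val s - 1 := by
    have := val_erase h0
    rwa [pow_zero] at this
  have h2 : val (s.erase 0) = τ * val ((s.erase 0).image (· - 1)) := by
    have := val_image_sub (s := s.erase 0) (d := 1) (fun k hk => by have := hge k hk; omega)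
    rwa [pow_one] at this
  linarith

lemma zero_not_mem_shift {s : Finset ℕ} (hs : Zk s) (h0 : 0 ∈ s) :
    0 ∉ (s.erase 0).image (· - 1) := by
  intro h
  obtain ⟨k, hk, hk1⟩ := Finset.mem_image.mp h
  have := erase_zero_ge_two hs h0 k hk
  omega

/-- The main gap lemma: if `a < b` in `ℤ_τ⁺`, then `b` is at least the "next"
element after `a`, which is `a + 1/τ` if the Zeckendorf rep of `a` contains `0`
and `a + 1` otherwise. -/
lemma ML : ∀ N : ℕ, ∀ s t : Finset ℕ, Zk s → Zk t → s.sup id + t.sup id ≤ N →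
    val s < val t → (if 0 ∈ s then val s + (τ - 1) else val s + 1) ≤ val t := by
  intro N
  induction N using Nat.strong_induction_on with
  | _ N ih =>
    intro s t hs ht hsup hlt
    have htne : t.Nonempty :=
      nonempty_of_val_ne_zero (ne_of_gt (lt_of_le_of_lt (val_nonneg s) hlt))
    by_cases h0s : 0 ∈ s
    · rw [if_pos h0s]
      have hvs1 : 1 ≤ val s := one_le_val ⟨0, h0s⟩
      have hds := val_decomp_zero hs h0s
      have hs2 := erase_zero_ge_two hs h0s
      have hZs'' : Zk ((s.erase 0).image (· - 1)) :=
        Zk_image_sub (Zk_subset (Finset.erase_subset _ _) hs)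
          (fun k hk => by have := hs2 k hk; omega)
      have h0s'' := zero_not_mem_shift hs h0s
      by_cases h0t : 0 ∈ t
      · -- both contain 0
        have ht2 := erase_zero_ge_two ht h0t
        have htU : (t.erase 0).Nonempty := by
          by_contra h
          have he : t.erase 0 = ∅ := Finset.not_nonempty_iff_eq_empty.mp h
          have : val t = 1 := by
            have h1 := val_erase h0t
            rw [he, val_empty, pow_zero] at h1
            linarith
          linarith
        have hdt := val_decomp_zero ht h0t
        have hZt'' : Zk ((t.erase 0).image (· - 1)) :=
          Zk_image_sub (Zk_subset (Finset.erase_subset _ _) ht)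
            (fun k hk => by have := ht2 k hk; omega)
        have hlt'' : val ((s.erase 0).image (· - 1)) < val ((t.erase 0).image (· - 1)) := by
          apply lt_of_mul_lt_mul_left _ (le_of_lt tau_pos)
          linarith
        have hsupt : 2 ≤ t.sup id := by
          obtain ⟨k, hk⟩ := htU
          exact le_trans (ht2 k hk) (le_sup_of_mem (Finset.mem_of_mem_erase hk))
        have hm : ((s.erase 0).image (· - 1)).sup id + ((t.erase 0).image (· - 1)).sup id < N := by
          have a1 : ((s.erase 0).image (· - 1)).sup id ≤ s.sup id - 1 :=
            le_trans (sup_image_sub_le _ _) (by have := sup_erase_le s 0; omega)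
          have a2 : ((t.erase 0).image (· - 1)).sup id ≤ t.sup id - 1 :=
            le_trans (sup_image_sub_le _ _) (by have := sup_erase_le t 0; omega)
          omega
        have hIH := ih _ hm _ _ hZs'' hZt'' le_rfl hlt''
        rw [if_neg h0s''] at hIH
        have := mul_le_mul_of_nonneg_left hIH (le_of_lt tau_pos)
        have htau := tau_gt_one
        nlinarith
      · -- 0 ∈ s, 0 ∉ t
        have hdt := val_decomp_pos h0t
        have hZt' : Zk (t.image (· - 1)) :=
          Zk_image_sub ht (fun k hk => by
            rcases Nat.eq_zero_or_pos k with rfl | h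
            · exact absurd hk h0t
            · exact h)
        have hlt' : val ((s.erase 0).image (· - 1)) < val (t.image (· - 1)) := by
          apply lt_of_mul_lt_mul_left _ (le_of_lt tau_pos)
          linarith
        have hsupt : 1 ≤ t.sup id := by
          obtain ⟨k, hk⟩ := htne
          have : 1 ≤ k := by
            rcases Nat.eq_zero_or_pos k with rfl | h
            · exact absurd hk h0t
            · exact h
          exact le_trans this (le_sup_of_mem hk)
        have hm : ((s.erase 0).image (· - 1)).sup id + (t.image (· - 1)).sup id < N := by
          have a1 : ((s.erase 0).image (· - 1)).sup id ≤ s.sup id :=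
            le_trans (sup_image_sub_le _ _) (by have := sup_erase_le s 0; omega)
          have a2 : (t.image (· - 1)).sup id ≤ t.sup id - 1 := sup_image_sub_le _ _
          omega
        have hIH := ih _ hm _ _ hZs'' hZt' le_rfl hlt'
        rw [if_neg h0s''] at hIH
        have := mul_le_mul_of_nonneg_left hIH (le_of_lt tau_pos)
        nlinarith
    · rw [if_neg h0s]
      rcases s.eq_empty_or_nonempty with rfl | hsne
      · rw [val_empty]
        have := one_le_val htne
        linarith
      have hvs1 : 1 ≤ val s := one_le_val hsne
      have hds := val_decomp_pos h0s
      have hs1 : ∀ k ∈ s, 1 ≤ k := by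
        intro k hk
        rcases Nat.eq_zero_or_pos k with rfl | h
        · exact absurd hk h0s
        · exact h
      have hZs' : Zk (s.image (· - 1)) := Zk_image_sub hs hs1
      have hsups : 1 ≤ s.sup id := by
        obtain ⟨k, hk⟩ := hsne
        exact le_trans (hs1 k hk) (le_sup_of_mem hk)
      by_cases h0t : 0 ∈ t
      · -- 0 ∉ s, 0 ∈ t
        have ht2 := erase_zero_ge_two ht h0t
        have htU : (t.erase 0).Nonempty := by
          by_contra h
          have he : t.erase 0 = ∅ := Finset.not_nonempty_iff_eq_empty.mp h
          have : val t = 1 := by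
            have h1 := val_erase h0t
            rw [he, val_empty, pow_zero] at h1
            linarith
          linarith
        have hdt := val_decomp_zero ht h0t
        have hZt'' : Zk ((t.erase 0).image (· - 1)) :=
          Zk_image_sub (Zk_subset (Finset.erase_subset _ _) ht)
            (fun k hk => by have := ht2 k hk; omega)
        have h0t'' := zero_not_mem_shift ht h0t
        rcases le_or_gt (val (s.image (· - 1))) (val ((t.erase 0).image (· - 1))) with h | h
        · have := mul_le_mul_of_nonneg_left h (le_of_lt tau_pos)
          linarith
        · exfalso
          have hsupt : 2 ≤ t.sup id := by
            obtain ⟨k, hk⟩ := htU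
            exact le_trans (ht2 k hk) (le_sup_of_mem (Finset.mem_of_mem_erase hk))
          have hm : ((t.erase 0).image (· - 1)).sup id + (s.image (· - 1)).sup id < N := by
            have a1 : (s.image (· - 1)).sup id ≤ s.sup id - 1 := sup_image_sub_le _ _
            have a2 : ((t.erase 0).image (· - 1)).sup id ≤ t.sup id - 1 :=
              le_trans (sup_image_sub_le _ _) (by have := sup_erase_le t 0; omega)
            omega
          have hIH := ih _ hm _ _ hZt'' hZs' le_rfl h
          rw [if_neg h0t''] at hIH
          have := mul_le_mul_of_nonneg_left hIH (le_of_lt tau_pos)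
          have htau := tau_gt_one
          nlinarith
      · -- 0 ∉ s, 0 ∉ t
        have hdt := val_decomp_pos h0t
        have ht1 : ∀ k ∈ t, 1 ≤ k := by
          intro k hk
          rcases Nat.eq_zero_or_pos k with rfl | h
          · exact absurd hk h0t
          · exact h
        have hZt' : Zk (t.image (· - 1)) := Zk_image_sub ht ht1
        have hlt' : val (s.image (· - 1)) < val (t.image (· - 1)) := by
          apply lt_of_mul_lt_mul_left _ (le_of_lt tau_pos)
          linarith
        have hsupt : 1 ≤ t.sup id := by
          obtain ⟨k, hk⟩ := htne
          exact le_trans (ht1 k hk) (le_sup_of_mem hk)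
        have hm : (s.image (· - 1)).sup id + (t.image (· - 1)).sup id < N := by
          have a1 : (s.image (· - 1)).sup id ≤ s.sup id - 1 := sup_image_sub_le _ _
          have a2 : (t.image (· - 1)).sup id ≤ t.sup id - 1 := sup_image_sub_le _ _
          omega
        have hIH := ih _ hm _ _ hZs' hZt' le_rfl hlt'
        by_cases h0s' : 0 ∈ s.image (· - 1)
        · rw [if_pos h0s'] at hIH
          have := mul_le_mul_of_nonneg_left hIH (le_of_lt tau_pos)
          have htsq := tau_sq
          nlinarith
        · rw [if_neg h0s'] at hIH
          have := mul_le_mul_of_nonneg_left hIH (le_of_lt tau_pos)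
          have htau := tau_gt_one
          nlinarith


lemma gap_lemma {s : Finset ℕ} (hs : Zk s) {b : ℝ} (hb : b ∈ Ztau) (h : val s < b) :
    (if 0 ∈ s then val s + (τ - 1) else val s + 1) ≤ b := by
  obtain ⟨u, rfl⟩ := mem_Ztau_iff.mp hb
  obtain ⟨t, ht, htv⟩ := zk_exists u
  rw [← htv] at h ⊢
  exact ML _ s t hs ht le_rfl h

lemma succZ_eq {a c : ℝ} (hc : c ∈ Ztau) (hac : a < c)
    (hub : ∀ b ∈ Ztau, a < b → c ≤ b) : succZ a = c := by
  apply IsLeast.csInf_eq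
  exact ⟨Set.mem_sep_iff.mpr ⟨hc, hac⟩, fun b hb => hub b hb.1 hb.2⟩

lemma predZ_eq {a c : ℝ} (hc : c ∈ Ztau) (hca : c < a)
    (hlb : ∀ b ∈ Ztau, b < a → b ≤ c) : predZ a = c := by
  apply IsGreatest.csSup_eq
  exact ⟨Set.mem_sep_iff.mpr ⟨hc, hca⟩, fun b hb => hlb b hb.1 hb.2⟩

lemma g_pos {s : Finset ℕ} : 0 < (if 0 ∈ s then τ - 1 else 1) := by
  split
  · linarith [tau_gt_one]
  · norm_num

lemma succZ_formula {a : ℝ} {s : Finset ℕ} (hs : Zk s) (hv : val s = a)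
    (hmem : a + (if 0 ∈ s then τ - 1 else 1) ∈ Ztau) :
    succZ a = a + (if 0 ∈ s then τ - 1 else 1) := by
  apply succZ_eq hmem (by linarith [g_pos (s := s)])
  intro b hb hab
  have := gap_lemma hs hb (by rw [hv]; exact hab)
  rw [hv] at this
  split at this <;> split <;> first | linarith | simp_all

lemma predZ_formula {a p : ℝ} {s : Finset ℕ} (hs : Zk s) (hv : val s = p)
    (hpg : p + (if 0 ∈ s then τ - 1 else 1) = a) : predZ a = p := by
  have hp : p ∈ Ztau := hv ▸ val_mem_Ztau s
  apply predZ_eq hp (by linarith [g_pos (s := s)])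
  intro b hb hba
  rcases le_or_gt b p with h | h
  · exact h
  · exfalso
    have hle := gap_lemma hs hb (by rw [hv]; exact h)
    rw [hv] at hle
    by_cases h0 : 0 ∈ s
    · rw [if_pos h0] at hle hpg; linarith
    · rw [if_neg h0] at hle hpg; linarith

/-- Zeckendorf representation of `1 + τ²y` contains `0`. -/
lemma repA {y : ℝ} (hy : y ∈ Ztau) : ∃ s, Zk s ∧ 0 ∈ s ∧ val s = 1 + τ ^ 2 * y := by
  obtain ⟨u, rfl⟩ := mem_Ztau_iff.mp hy
  obtain ⟨t₀, ht₀, htv⟩ := zk_exists u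
  have h0 : (0:ℕ) ∉ t₀.image (· + 1) := by
    intro h; obtain ⟨k, _, hk⟩ := Finset.mem_image.mp h; omega
  obtain ⟨s, m₀, h1, h2, h3, h4, h5⟩ := lemG_base h0 (Zk_image_add ht₀ 1) 0
  subst h4
  refine ⟨s, h1, h2, ?_⟩
  rw [h5, val_image_add, htv, pow_zero, pow_one]
  ring

/-- representation of `τ·y` avoiding `0`. -/
lemma repMul {y : ℝ} (hy : y ∈ Ztau) : ∃ s, Zk s ∧ 0 ∉ s ∧ val s = τ * y := by
  obtain ⟨u, rfl⟩ := mem_Ztau_iff.mp hy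
  obtain ⟨t₀, ht₀, htv⟩ := zk_exists u
  refine ⟨t₀.image (· + 1), Zk_image_add ht₀ 1, ?_, ?_⟩
  · intro h; obtain ⟨k, _, hk⟩ := Finset.mem_image.mp h; omega
  · rw [val_image_add, htv, pow_one]

lemma repB' {y : ℝ} (hy : y ∈ Ztau) :
    ∃ s m₀, Zk s ∧ m₀ ∈ s ∧ (∀ k ∈ s, m₀ ≤ k) ∧ m₀ % 2 = 1 ∧
      val s = τ + τ ^ 2 * y := by
  obtain ⟨u, rfl⟩ := mem_Ztau_iff.mp hy
  obtain ⟨t₀, ht₀, htv⟩ := zk_exists u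
  obtain ⟨s, m₀, h1, h2, h3, h4, h5, h6⟩ := lemG_aux t₀.card t₀ ht₀ le_rfl 1 le_rfl
  refine ⟨s, m₀, h1, h2, h3, by omega, ?_⟩
  rw [h6, htv, pow_one]

lemma repC' {y : ℝ} (hy : y ∈ Ztau) :
    ∃ s m₀, Zk s ∧ m₀ ∈ s ∧ (∀ k ∈ s, m₀ ≤ k) ∧ m₀ % 2 = 0 ∧ 1 ≤ m₀ ∧
      val s = τ ^ 2 + τ ^ 3 * y := by
  obtain ⟨u, rfl⟩ := mem_Ztau_iff.mp hy
  obtain ⟨t₀, ht₀, htv⟩ := zk_exists u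
  obtain ⟨s, m₀, h1, h2, h3, h4, h5, h6⟩ := lemG_aux t₀.card t₀ ht₀ le_rfl 2 (by norm_num)
  refine ⟨s, m₀, h1, h2, h3, by omega, h4, ?_⟩
  rw [h6, htv]

lemma repB {y : ℝ} (hy : y ∈ Ztau) : ∃ s, Zk s ∧ 0 ∉ s ∧ val s = τ + τ ^ 2 * y := by
  obtain ⟨s, m₀, h1, h2, h3, h4, h5⟩ := repB' hy
  exact ⟨s, h1, fun h0 => by have := h3 0 h0; omega, h5⟩

lemma repC {y : ℝ} (hy : y ∈ Ztau) : ∃ s, Zk s ∧ 0 ∉ s ∧ val s = τ ^ 2 + τ ^ 3 * y := by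
  obtain ⟨s, m₀, h1, h2, h3, h4, h5, h6⟩ := repC' hy
  exact ⟨s, h1, fun h0 => by have := h3 0 h0; omega, h6⟩

lemma mem_tau_mul {y : ℝ} (hy : y ∈ Ztau) : τ * y ∈ Ztau := by
  obtain ⟨s, _, _, hv⟩ := repMul hy
  exact hv ▸ val_mem_Ztau s

lemma mem_one_add_tau {y : ℝ} (hy : y ∈ Ztau) : 1 + τ * y ∈ Ztau := by
  obtain ⟨u, rfl⟩ := mem_Ztau_iff.mp hy
  have h0 : (0:ℕ) ∉ u.image (· + 1) := by
    intro h; obtain ⟨k, _, hk⟩ := Finset.mem_image.mp h; omega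
  have : val (insert 0 (u.image (· + 1))) = 1 + τ * val u := by
    rw [val, Finset.sum_insert h0, ← val, val_image_add, pow_zero, pow_one]
  exact this ▸ val_mem_Ztau _

lemma mem_one_add_tau_add {y : ℝ} (hy : y ∈ Ztau) : 1 + τ + τ ^ 2 * y ∈ Ztau := by
  obtain ⟨s, hZ, h0, hv⟩ := repB hy
  have h0' : (0:ℕ) ∉ s := h0
  have : val (insert 0 s) = 1 + (τ + τ ^ 2 * y) := by
    rw [val, Finset.sum_insert h0', ← val, hv, pow_zero]
  have hm := this ▸ val_mem_Ztau (insert 0 s)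
  convert hm using 1
  ring


lemma classA_gaps {a y : ℝ} (hy : y ∈ Ztau) (hya : 1 + τ ^ 2 * y = a) :
    a - predZ a = 1 ∧ succZ a - a = 1 / τ := by
  obtain ⟨sa, hZa, h0a, hva⟩ := repA hy
  rw [hya] at hva
  have hsucc : succZ a = a + (τ - 1) := by
    have hmem : a + (if 0 ∈ sa then τ - 1 else 1) ∈ Ztau := by
      rw [if_pos h0a]
      obtain ⟨sb, _, _, hvb⟩ := repB hy
      have he : a + (τ - 1) = τ + τ ^ 2 * y := by rw [← hya]; ring
      rw [he, ← hvb]; exact val_mem_Ztau sb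
    have := succZ_formula hZa hva hmem
    rwa [if_pos h0a] at this
  have hpred : predZ a = a - 1 := by
    obtain ⟨sp, hZp, h0p, hvp⟩ := repMul (mem_tau_mul hy)
    have hvp' : val sp = a - 1 := by rw [hvp, ← hya]; ring
    exact predZ_formula hZp hvp' (by rw [if_neg h0p]; ring)
  exact ⟨by rw [hpred]; ring, by rw [hsucc, ← tau_inv]; ring⟩

lemma classB_gaps {a y : ℝ} (hy : y ∈ Ztau) (hya : τ + τ ^ 2 * y = a) :
    a - predZ a = 1 / τ ∧ succZ a - a = 1 := by
  obtain ⟨sa, hZa, h0a, hva⟩ := repB hy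
  rw [hya] at hva
  have hsucc : succZ a = a + 1 := by
    have hmem : a + (if 0 ∈ sa then τ - 1 else 1) ∈ Ztau := by
      rw [if_neg h0a]
      have he : a + 1 = 1 + τ + τ ^ 2 * y := by rw [← hya]; ring
      rw [he]; exact mem_one_add_tau_add hy
    have := succZ_formula hZa hva hmem
    rwa [if_neg h0a] at this
  have hpred : predZ a = a - (τ - 1) := by
    obtain ⟨sp, hZp, h0p, hvp⟩ := repA hy
    have hvp' : val sp = a - (τ - 1) := by rw [hvp, ← hya]; ring
    exact predZ_formula hZp hvp' (by rw [if_pos h0p]; ring)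
  exact ⟨by rw [hpred, ← tau_inv]; ring, by rw [hsucc]; ring⟩

lemma classC_gaps {a y : ℝ} (hy : y ∈ Ztau) (hya : τ ^ 2 + τ ^ 3 * y = a) :
    a - predZ a = 1 ∧ succZ a - a = 1 := by
  obtain ⟨sa, hZa, h0a, hva⟩ := repC hy
  rw [hya] at hva
  have hsucc : succZ a = a + 1 := by
    have hmem : a + (if 0 ∈ sa then τ - 1 else 1) ∈ Ztau := by
      rw [if_neg h0a]
      have he : a + 1 = 1 + τ ^ 2 * (1 + τ * y) := by rw [← hya]; ring
      rw [he]
      obtain ⟨s, _, _, hv⟩ := repA (mem_one_add_tau hy)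
      exact hv ▸ val_mem_Ztau s
    have := succZ_formula hZa hva hmem
    rwa [if_neg h0a] at this
  have hpred : predZ a = a - 1 := by
    obtain ⟨sp, hZp, h0p, hvp⟩ := repB (mem_tau_mul hy)
    have hvp' : val sp = a - 1 := by
      rw [hvp, ← hya]
      have h := tau_sq
      nlinarith [h]
    exact predZ_formula hZp hvp' (by rw [if_neg h0p]; ring)
  exact ⟨by rw [hpred]; ring, by rw [hsucc]; ring⟩

lemma partii1 : Ztau \ {0} =
    ((fun y => τ * y) '' Ztau \ {0}) ∪ (fun y => 1 + τ ^ 2 * y) '' Ztau := by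
  ext x
  simp only [Set.mem_diff, Set.mem_singleton_iff, Set.mem_union, Set.mem_image]
  constructor
  · rintro ⟨hx, hx0⟩
    obtain ⟨u, rfl⟩ := mem_Ztau_iff.mp hx
    obtain ⟨t, ht, htv⟩ := zk_exists u
    have htne : t.Nonempty := nonempty_of_val_ne_zero (by rw [htv]; exact hx0)
    by_cases h0 : 0 ∈ t
    · right
      obtain ⟨y, hy, hyv⟩ := H_zero ht h0
      exact ⟨y, hy, by rw [← htv, hyv]⟩
    · left
      have hmin : ∀ k ∈ t, t.min' htne ≤ k := fun k hk => Finset.min'_le t k hk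
      have h1 : 1 ≤ t.min' htne := by
        rcases Nat.eq_zero_or_pos (t.min' htne) with h | h
        · exact absurd (h ▸ t.min'_mem htne) h0
        · exact h
      obtain ⟨y, hy, hyv⟩ := H_pos (t.min'_mem htne) hmin h1
      exact ⟨⟨y, hy, by rw [← htv, hyv]⟩, hx0⟩
  · rintro (⟨⟨y, hy, hyx⟩, hx0⟩ | ⟨y, hy, hyx⟩)
    · replace hyx : τ * y = x := hyx
      subst hyx
      exact ⟨mem_tau_mul hy, hx0⟩
    · replace hyx : 1 + τ ^ 2 * y = x := hyx
      subst hyx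
      constructor
      · obtain ⟨s, _, _, hv⟩ := repA hy; exact hv ▸ val_mem_Ztau s
      · have h1 := Ztau_nonneg hy
        have h2 := tau_pow_pos 2
        intro h
        nlinarith

lemma partii2 : Disjoint ((fun y => τ * y) '' Ztau \ {0})
    ((fun y => 1 + τ ^ 2 * y) '' Ztau) := by
  rw [Set.disjoint_left]
  rintro x ⟨hx1, _⟩ hx2
  obtain ⟨y, hy, hyx⟩ := hx1
  obtain ⟨z, hz, hzx⟩ := hx2
  replace hyx : τ * y = x := hyx
  replace hzx : 1 + τ ^ 2 * z = x := hzx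
  obtain ⟨s1, hZ1, h01, hv1⟩ := repMul hy
  obtain ⟨s2, hZ2, h02, hv2⟩ := repA hz
  have hss : s1 = s2 := zk_unique hZ1 hZ2 (by rw [hv1, hv2, hyx, hzx])
  exact h01 (hss ▸ h02)

lemma partii3 : (fun y => τ * y) '' Ztau \ {0} =
    (fun y => τ + τ ^ 2 * y) '' Ztau ∪ (fun y => τ ^ 2 + τ ^ 3 * y) '' Ztau := by
  ext x
  simp only [Set.mem_diff, Set.mem_singleton_iff, Set.mem_union, Set.mem_image]
  constructor
  · rintro ⟨⟨y, hy, hyx⟩, hx0⟩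
    replace hyx : τ * y = x := hyx
    subst hyx
    have hy0 : y ≠ 0 := fun h => hx0 (by rw [h, mul_zero])
    obtain ⟨u, rfl⟩ := mem_Ztau_iff.mp hy
    obtain ⟨t, ht, htv⟩ := zk_exists u
    have htne : t.Nonempty := nonempty_of_val_ne_zero (by rw [htv]; exact hy0)
    have hZ1 : Zk (t.image (· + 1)) := Zk_image_add ht 1
    have hv1 : val (t.image (· + 1)) = τ * val u := by rw [val_image_add, htv, pow_one]
    have hs1ne : (t.image (· + 1)).Nonempty := htne.image _
    have hmem := (t.image (· + 1)).min'_mem hs1ne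
    have hmin : ∀ k ∈ t.image (· + 1), (t.image (· + 1)).min' hs1ne ≤ k :=
      fun k hk => Finset.min'_le _ k hk
    have h1 : 1 ≤ (t.image (· + 1)).min' hs1ne := by
      obtain ⟨k, _, hk1⟩ := Finset.mem_image.mp hmem
      omega
    rcases Nat.even_or_odd ((t.image (· + 1)).min' hs1ne) with he | ho
    · right
      obtain ⟨j, hj⟩ : ∃ j, (t.image (· + 1)).min' hs1ne = 2 * j + 2 := by
        obtain ⟨j, hj⟩ := he; exact ⟨j - 1, by omega⟩
      obtain ⟨y', hy', hyv⟩ := H_even hZ1 hmem hmin hj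
      exact ⟨y', hy', by rw [← hv1, hyv]⟩
    · left
      obtain ⟨j, hj⟩ := ho
      obtain ⟨y', hy', hyv⟩ := H_odd hZ1 hmem hmin hj
      exact ⟨y', hy', by rw [← hv1, hyv]⟩
  · rintro (⟨y, hy, hyx⟩ | ⟨y, hy, hyx⟩)
    · replace hyx : τ + τ ^ 2 * y = x := hyx
      subst hyx
      refine ⟨⟨1 + τ * y, mem_one_add_tau hy, by show τ * (1 + τ * y) = _; ring⟩, ?_⟩
      have h1 := Ztau_nonneg hy
      have h2 := tau_pos
      have h3 := tau_pow_pos 2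
      intro h
      nlinarith
    · replace hyx : τ ^ 2 + τ ^ 3 * y = x := hyx
      subst hyx
      refine ⟨⟨τ + τ ^ 2 * y, ?_, by show τ * (τ + τ ^ 2 * y) = _; ring⟩, ?_⟩
      · obtain ⟨s, _, _, hv⟩ := repB hy; exact hv ▸ val_mem_Ztau s
      · have h1 := Ztau_nonneg hy
        have h2 := tau_pow_pos 2
        have h3 := tau_pow_pos 3
        intro h
        nlinarith

lemma partii4 : Disjoint ((fun y => τ + τ ^ 2 * y) '' Ztau)
    ((fun y => τ ^ 2 + τ ^ 3 * y) '' Ztau) := by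
  rw [Set.disjoint_left]
  rintro x ⟨y, hy, hyx⟩ ⟨z, hz, hzx⟩
  replace hyx : τ + τ ^ 2 * y = x := hyx
  replace hzx : τ ^ 2 + τ ^ 3 * z = x := hzx
  obtain ⟨s1, m1, hZ1, hm1, hmin1, hp1, hv1⟩ := repB' hy
  obtain ⟨s2, m2, hZ2, hm2, hmin2, hp2, _, hv2⟩ := repC' hz
  have hss : s1 = s2 := zk_unique hZ1 hZ2 (by rw [hv1, hv2, hyx, hzx])
  subst hss
  have e1 : m1 ≤ m2 := hmin1 m2 hm2
  have e2 : m2 ≤ m1 := hmin2 m1 hm1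
  omega

lemma parti : ∀ x ∈ Ztau, x ≠ 0 →
    ∃! s : Finset ℕ, (∀ k ∈ s, k + 1 ∉ s) ∧ x = ∑ k ∈ s, τ ^ k := by
  intro x hx _
  obtain ⟨u, rfl⟩ := mem_Ztau_iff.mp hx
  obtain ⟨t, ht, htv⟩ := zk_exists u
  refine ⟨t, ⟨ht, htv.symm⟩, ?_⟩
  rintro t' ⟨ht', hv'⟩
  have h1 : val t' = val u := hv'.symm
  exact zk_unique ht' ht (h1.trans htv.symm)

end TauInt

open TauInt in
theorem tau_integers_structure :
    (∀ x ∈ Ztau, x ≠ 0 →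
      ∃! s : Finset ℕ, (∀ k ∈ s, k + 1 ∉ s) ∧ x = ∑ k ∈ s, τ ^ k) ∧
    (Ztau \ {0} = ((fun y => τ * y) '' Ztau \ {0}) ∪ (fun y => 1 + τ ^ 2 * y) '' Ztau ∧
      Disjoint ((fun y => τ * y) '' Ztau \ {0}) ((fun y => 1 + τ ^ 2 * y) '' Ztau) ∧
      (fun y => τ * y) '' Ztau \ {0} =
        (fun y => τ + τ ^ 2 * y) '' Ztau ∪ (fun y => τ ^ 2 + τ ^ 3 * y) '' Ztau ∧
      Disjoint ((fun y => τ + τ ^ 2 * y) '' Ztau) ((fun y => τ ^ 2 + τ ^ 3 * y) '' Ztau)) ∧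
    ∀ a ∈ Ztau, a ≠ 0 →
      (a ∈ (fun y => 1 + τ ^ 2 * y) '' Ztau →
        a - predZ a = 1 ∧ succZ a - a = 1 / τ) ∧
      (a ∈ (fun y => τ + τ ^ 2 * y) '' Ztau →
        a - predZ a = 1 / τ ∧ succZ a - a = 1) ∧
      (a ∈ (fun y => τ ^ 2 + τ ^ 3 * y) '' Ztau →
        a - predZ a = 1 ∧ succZ a - a = 1) := by
  refine ⟨parti, ⟨partii1, partii2, partii3, partii4⟩, ?_⟩
  intro a _ _
  refine ⟨?_, ?_, ?_⟩
  · rintro ⟨y, hy, hya⟩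
    exact classA_gaps hy hya
  · rintro ⟨y, hy, hya⟩
    exact classB_gaps hy hya
  · rintro ⟨y, hy, hya⟩
    exact classC_gaps hy hya
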